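/- In the min-cost popular instance construction from a monotone 1-in-3 SAT instance with m clauses, any multiset B of items such that the resulting instance (A ∪ B, E) admits a popular matching matching all people has total cost at least 14m. -/

import Mathlib

/-- Person `a` prefers matching `M` to `M'`. -/
def Prefers {α β : Type*} (rank : α → β → ℕ∞) (M M' : α → Option β) (a : α) : Prop :=
  (∃ b, M a = some b ∧ M' a = none) ∨
  (∃ b b', M a = some b ∧ M' a = some b' ∧ rank a b < rank a b')

/-- `M'` is more popular than `M`. -/
def MorePopular {α β : Type*} [Fintype α] (rank : α → β → ℕ∞) (M' M : α → Option β) : Prop :=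
  Nat.card {a // Prefers rank M M' a} < Nat.card {a // Prefers rank M' M a}

/-- `(a,b)` is an edge of the instance: `b` is on `a`'s preference list. -/
def Edge {α β : Type*} (rank : α → β → ℕ∞) (a : α) (b : β) : Prop := rank a b ≠ ⊤

/-- Number of people matched to item `b`. -/
noncomputable def usage {α β : Type*} [Fintype α] (M : α → Option β) (b : β) : ℕ :=
  Nat.card {a // M a = some b}

/-- A matching of the instance in which each item `b` may be matched to up to
`copies b` people (`copies b = 0` means `b` is not available). -/
def IsCapMatching {α β : Type*} [Fintype α] (rank : α → β → ℕ∞) (copies : β → ℕ)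
    (M : α → Option β) : Prop :=
  (∀ a b, M a = some b → Edge rank a b) ∧ ∀ b, usage M b ≤ copies b

/-- A popular matching of the capacitated instance. -/
def PopularCap {α β : Type*} [Fintype α] (rank : α → β → ℕ∞) (copies : β → ℕ)
    (M : α → Option β) : Prop :=
  IsCapMatching rank copies M ∧
  ∀ M', IsCapMatching rank copies M' → ¬ MorePopular rank M' M

/-- A 1-in-3 satisfying assignment: exactly one literal of every clause is true. -/
def ExactlyOneTrue {n : ℕ} {m : ℕ} (cl : Fin m → Fin 3 → Fin n) (τ : Fin n → Bool) : Prop :=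
  ∀ i, ∃! k : Fin 3, τ (cl i k) = true

/-- Items of the min-cost popular instance construction: `Sum.inl j` is the public item
`u_j`; `Sum.inr (i, t)` with `t = 0,1,2` are the internal items `p₁,p₂,p₃` of clause `i`
and `t = 3` is the internal item `q` of clause `i`. -/
abbrev InstItems (m n : ℕ) := Fin n ⊕ (Fin m × Fin 4)

/-- Preference lists of the 9 people of each clause gadget (Fig. 1):
for clause `Cᵢ = (X_{j₁} ∨ X_{j₂} ∨ X_{j₃})`, person `a₁..a₃` have lists
`(u_{j₁},u_{j₂})`, `(u_{j₂},u_{j₃})`, `(u_{j₁},u_{j₃})`; `a₄..a₆` have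
`(u_{j₁},p₁)`, `(u_{j₂},p₂)`, `(u_{j₃},p₃)`; `a₇..a₉` have `(p₁,q)`, `(p₂,q)`, `(p₃,q)`. -/
def instRank {m n : ℕ} (cl : Fin m → Fin 3 → Fin n) :
    Fin m × Fin 9 → InstItems m n → ℕ∞ := fun a b =>
  let i := a.1
  let k : ℕ := (a.2 : ℕ)
  match b with
  | Sum.inl u =>
      if k = 0 then (if u = cl i 0 then 1 else if u = cl i 1 then 2 else ⊤)
      else if k = 1 then (if u = cl i 1 then 1 else if u = cl i 2 then 2 else ⊤)
      else if k = 2 then (if u = cl i 0 then 1 else if u = cl i 2 then 2 else ⊤)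
      else if k = 3 then (if u = cl i 0 then 1 else ⊤)
      else if k = 4 then (if u = cl i 1 then 1 else ⊤)
      else if k = 5 then (if u = cl i 2 then 1 else ⊤)
      else ⊤
  | Sum.inr jt =>
      if jt.1 = i then
        (if k = 3 ∧ (jt.2 : ℕ) = 0 then 2
         else if k = 4 ∧ (jt.2 : ℕ) = 1 then 2
         else if k = 5 ∧ (jt.2 : ℕ) = 2 then 2
         else if k = 6 ∧ (jt.2 : ℕ) = 0 then 1
         else if k = 7 ∧ (jt.2 : ℕ) = 1 then 1
         else if k = 8 ∧ (jt.2 : ℕ) = 2 then 1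
         else if k = 6 ∧ (jt.2 : ℕ) = 3 then 2
         else if k = 7 ∧ (jt.2 : ℕ) = 3 then 2
         else if k = 8 ∧ (jt.2 : ℕ) = 3 then 2
         else ⊤)
      else ⊤

/-- Costs: each public item `u_j` costs 3, each internal item `p_t` costs 1, and each
internal item `q` costs 0. -/
def instCost {m n : ℕ} : InstItems m n → ℕ := fun b =>
  match b with
  | Sum.inl _ => 3
  | Sum.inr jt => if (jt.2 : ℕ) = 3 then 0 else 1

/-- Total cost of buying the chosen numbers of copies of the items. -/
def instTotalCost {m n : ℕ} (copies : InstItems m n → ℕ) : ℕ :=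
  ∑ b : InstItems m n, copies b * instCost b

section Generic
open Finset
variable {α β : Type*} [Fintype α] [DecidableEq α] [DecidableEq β]

omit [DecidableEq α] [DecidableEq β] in
lemma natCard_subtype (P : α → Prop) [DecidablePred P] :
    Nat.card {a // P a} = (Finset.univ.filter P).card := by
  rw [Nat.card_eq_fintype_card, Fintype.card_subtype]

omit [DecidableEq α] in
lemma usage_eq_filter (M : α → Option β) (b : β) :
    usage M b = (Finset.univ.filter (fun a => M a = some b)).card := by
  rw [usage, natCard_subtype]

omit [Fintype α] [DecidableEq α] [DecidableEq β] in
lemma not_prefers_of_eq {rank : α → β → ℕ∞} {M M' : α → Option β} {a : α}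
    (h : M' a = M a) : ¬ Prefers rank M M' a := by
  rintro (⟨b, h1, h2⟩ | ⟨b, b', h1, h2, h3⟩)
  · rw [h, h1] at h2; exact nomatch h2
  · rw [h, h1, Option.some_inj] at h2
    subst h2; exact lt_irrefl _ h3

omit [DecidableEq α] in
lemma usage_pos_of_matched (M : α → Option β) (a : α) (b : β) (h : M a = some b) :
    1 ≤ usage M b := by
  rw [usage_eq_filter]
  exact Finset.card_pos.mpr ⟨a, Finset.mem_filter.mpr ⟨Finset.mem_univ _, h⟩⟩

open Finset in
lemma pop_no_single_improve {rank : α → β → ℕ∞} {copies : β → ℕ} {M : α → Option β}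
    (h : PopularCap rank copies M) {a : α} {b b' : β}
    (hab : M a = some b) (hlt : rank a b' < rank a b)
    (hfree : usage M b' < copies b') : False := by
  classical
  set M' := Function.update M a (some b') with hM'
  have hMa' : M' a = some b' := Function.update_self a (some b') M
  have hne : ∀ a', a' ≠ a → M' a' = M a' := fun a' ha' => Function.update_of_ne ha' _ _
  apply h.2 M'
  · constructor
    · intro a' c hc
      by_cases ha' : a' = a
      · subst ha'; rw [hMa', Option.some_inj] at hc; subst hc
        exact hlt.ne_top
      · exact h.1.1 a' c (by rwa [hne a' ha'] at hc)
    · intro c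
      by_cases hcb : c = b'
      · subst hcb
        have hsub : (univ.filter (fun x => M' x = some c)) ⊆
            insert a (univ.filter (fun x => M x = some c)) := by
          intro x hx
          rw [mem_filter] at hx
          by_cases hxa : x = a
          · rw [hxa]; exact mem_insert_self a _
          · exact mem_insert_of_mem (mem_filter.mpr ⟨mem_univ _, by rw [← hne x hxa]; exact hx.2⟩)
        calc usage M' c = _ := usage_eq_filter M' c
          _ ≤ _ := card_le_card hsub
          _ ≤ _ + 1 := card_insert_le _ _
          _ = usage M c + 1 := by rw [usage_eq_filter]
          _ ≤ copies c := hfree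
      · have hsub : (univ.filter (fun x => M' x = some c)) ⊆
            (univ.filter (fun x => M x = some c)) := by
          intro x hx
          rw [mem_filter] at hx ⊢
          refine ⟨mem_univ _, ?_⟩
          by_cases hxa : x = a
          · exfalso; rw [hxa, hMa', Option.some_inj] at hx; exact hcb hx.2.symm
          · rw [← hne x hxa]; exact hx.2
        calc usage M' c = _ := usage_eq_filter M' c
          _ ≤ _ := card_le_card hsub
          _ = usage M c := (usage_eq_filter M c).symm
          _ ≤ copies c := h.1.2 c
  · unfold MorePopular
    have h0 : Nat.card {x // Prefers rank M M' x} = 0 := by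
      rw [natCard_subtype, Finset.card_eq_zero, Finset.filter_eq_empty_iff]
      intro x _
      by_cases hxa : x = a
      · subst hxa
        rintro (⟨c, h1, h2⟩ | ⟨c, c', h1, h2, h3⟩)
        · rw [hMa'] at h2; exact nomatch h2
        · rw [hab, Option.some_inj] at h1; rw [hMa', Option.some_inj] at h2
          subst h1; subst h2; exact absurd h3 (not_lt.mpr hlt.le)
      · exact not_prefers_of_eq (hne x hxa)
    have h1 : 0 < Nat.card {x // Prefers rank M' M x} := by
      rw [natCard_subtype, Finset.card_pos]
      exact ⟨a, mem_filter.mpr ⟨mem_univ _, Or.inr ⟨b', b, hMa', hab, hlt⟩⟩⟩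
    rw [h0]; exact h1

open Finset in
lemma pop_no_swap {rank : α → β → ℕ∞} {copies : β → ℕ} {M : α → Option β}
    (h : PopularCap rank copies M) {a₁ a₂ x : α} {b₁ b₂ b₃ : β}
    (h12 : a₁ ≠ a₂) (h1x : a₁ ≠ x) (h2x : a₂ ≠ x)
    (hM1 : M a₁ = some b₁) (hM2 : M a₂ = some b₂) (hMx : M x = some b₃)
    (hr1 : rank a₁ b₂ < rank a₁ b₁) (hr2 : rank a₂ b₃ < rank a₂ b₂) : False := by
  classical
  set M' : α → Option β := fun a =>
    if a = x then none else if a = a₁ then some b₂ else if a = a₂ then some b₃ else M a with hM'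
  have hMx' : M' x = none := by simp [hM']
  have hM1' : M' a₁ = some b₂ := by simp [hM', h1x]
  have hM2' : M' a₂ = some b₃ := by simp [hM', h2x, h12.symm]
  have hoth : ∀ a, a ≠ x → a ≠ a₁ → a ≠ a₂ → M' a = M a := by
    intro a hx h1 h2; simp [hM', hx, h1, h2]
  apply h.2 M'
  · constructor
    · intro a c hc
      by_cases hax : a = x
      · subst hax; rw [hMx'] at hc; exact nomatch hc
      by_cases ha1 : a = a₁
      · subst ha1; rw [hM1', Option.some_inj] at hc; subst hc; exact hr1.ne_top
      by_cases ha2 : a = a₂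
      · subst ha2; rw [hM2', Option.some_inj] at hc; subst hc; exact hr2.ne_top
      · exact h.1.1 a c (by rw [← hoth a hax ha1 ha2]; exact hc)
    · intro c
      set f : α → α := fun a => if a = a₁ then a₂ else if a = a₂ then x else a with hf
      have hmaps : ∀ a ∈ univ.filter (fun a => M' a = some c),
          f a ∈ univ.filter (fun a => M a = some c) := by
        intro a ha
        rw [mem_filter] at ha ⊢
        refine ⟨mem_univ _, ?_⟩
        by_cases hax : a = x
        · exfalso; rw [hax, hMx'] at ha; exact nomatch ha.2
        by_cases ha1 : a = a₁
        · subst ha1; rw [hM1', Option.some_inj] at ha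
          simp only [hf, if_pos rfl]; rw [← ha.2]; exact hM2
        by_cases ha2 : a = a₂
        · subst ha2; rw [hM2', Option.some_inj] at ha
          simp only [hf, if_neg h12.symm, if_pos rfl]; rw [← ha.2]; exact hMx
        · simp only [hf, if_neg ha1, if_neg ha2]
          rw [← hoth a hax ha1 ha2]; exact ha.2
      have hinj : Set.InjOn f (univ.filter (fun a => M' a = some c)) := by
        intro a ha a' ha' hfa
        rw [Finset.coe_filter, Set.mem_setOf_eq] at ha ha'
        have hax : a ≠ x := by rintro rfl; rw [hMx'] at ha; exact nomatch ha.2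
        have hax' : a' ≠ x := by rintro rfl; rw [hMx'] at ha'; exact nomatch ha'.2
        simp only [hf] at hfa
        by_cases e1 : a = a₁ <;> by_cases e1' : a' = a₁ <;>
          by_cases e2 : a = a₂ <;> by_cases e2' : a' = a₂
        all_goals first
          | (exact e1.trans e1'.symm)
          | (exact e2.trans e2'.symm)
          | (exact absurd (e1.symm.trans e2) h12)
          | (exact absurd (e1'.symm.trans e2') h12)
          | (exfalso; rw [if_pos e1, if_neg e1', if_pos e2'] at hfa; exact h2x hfa)
          | (exfalso; rw [if_pos e1, if_neg e1', if_neg e2'] at hfa; exact e2' hfa.symm)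
          | (exfalso; rw [if_neg e1, if_pos e2, if_pos e1'] at hfa; exact h2x hfa.symm)
          | (exfalso; rw [if_neg e1, if_pos e2, if_neg e1', if_neg e2'] at hfa; exact hax' hfa.symm)
          | (exfalso; rw [if_neg e1, if_neg e2, if_pos e1'] at hfa; exact e2 hfa)
          | (exfalso; rw [if_neg e1, if_neg e2, if_neg e1', if_pos e2'] at hfa; exact hax hfa)
          | (rw [if_neg e1, if_neg e2, if_neg e1', if_neg e2'] at hfa; exact hfa)
      have hcard := Finset.card_le_card_of_injOn f hmaps hinj
      calc usage M' c = _ := usage_eq_filter M' c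
        _ ≤ _ := hcard
        _ = usage M c := (usage_eq_filter M c).symm
        _ ≤ copies c := h.1.2 c
  · unfold MorePopular
    have hle : Nat.card {a // Prefers rank M M' a} ≤ 1 := by
      rw [natCard_subtype]
      have hsub : univ.filter (fun a => Prefers rank M M' a) ⊆ {x} := by
        intro a ha
        rw [mem_filter] at ha
        rw [mem_singleton]
        by_contra hax
        by_cases ha1 : a = a₁
        · subst ha1
          rcases ha.2 with ⟨c, h1, h2⟩ | ⟨c, c', h1, h2, h3⟩
          · rw [hM1'] at h2; exact nomatch h2
          · rw [hM1', Option.some_inj] at h2; rw [hM1, Option.some_inj] at h1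
            subst h1; subst h2; exact absurd h3 (not_lt.mpr hr1.le)
        by_cases ha2 : a = a₂
        · subst ha2
          rcases ha.2 with ⟨c, h1, h2⟩ | ⟨c, c', h1, h2, h3⟩
          · rw [hM2'] at h2; exact nomatch h2
          · rw [hM2', Option.some_inj] at h2; rw [hM2, Option.some_inj] at h1
            subst h1; subst h2; exact absurd h3 (not_lt.mpr hr2.le)
        · exact not_prefers_of_eq (hoth a hax ha1 ha2) ha.2
      calc _ ≤ ({x} : Finset α).card := card_le_card hsub
        _ = 1 := card_singleton x
    have hge : 2 ≤ Nat.card {a // Prefers rank M' M a} := by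
      rw [natCard_subtype]
      have hsub : ({a₁, a₂} : Finset α) ⊆ univ.filter (fun a => Prefers rank M' M a) := by
        intro a ha
        rw [mem_insert, mem_singleton] at ha
        rw [mem_filter]
        rcases ha with rfl | rfl
        · exact ⟨mem_univ _, Or.inr ⟨b₂, b₁, hM1', hM1, hr1⟩⟩
        · exact ⟨mem_univ _, Or.inr ⟨b₃, b₂, hM2', hM2, hr2⟩⟩
      calc 2 = ({a₁, a₂} : Finset α).card := (card_pair h12).symm
        _ ≤ _ := card_le_card hsub
    omega

end Generic

section Inst
open Finset

variable {m n : ℕ}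

/-- Cost of the item a person is matched to (0 if unmatched). -/
def mcost {m n : ℕ} (o : Option (InstItems m n)) : ℕ := o.elim 0 instCost

variable (cl : Fin m → Fin 3 → Fin n) (i : Fin m)

lemma edge0 (b : InstItems m n) (h : instRank cl (i, 0) b ≠ ⊤) :
    b = Sum.inl (cl i 0) ∨ b = Sum.inl (cl i 1) := by
  rcases b with u | jt
  · by_cases h0 : u = cl i 0
    · exact Or.inl (by rw [h0])
    by_cases h1 : u = cl i 1
    · exact Or.inr (by rw [h1])
    · exact absurd (by simp [instRank, h0, h1, show ((0:Fin 9):ℕ) = 0 from rfl]) h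
  · exact absurd (by simp [instRank, show ((0:Fin 9):ℕ) = 0 from rfl]) h

lemma edge1 (b : InstItems m n) (h : instRank cl (i, 1) b ≠ ⊤) :
    b = Sum.inl (cl i 1) ∨ b = Sum.inl (cl i 2) := by
  rcases b with u | jt
  · by_cases h0 : u = cl i 1
    · exact Or.inl (by rw [h0])
    by_cases h1 : u = cl i 2
    · exact Or.inr (by rw [h1])
    · exact absurd (by simp [instRank, h0, h1, show ((1:Fin 9):ℕ) = 1 from rfl]) h
  · exact absurd (by simp [instRank, show ((1:Fin 9):ℕ) = 1 from rfl]) h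

lemma edge2 (b : InstItems m n) (h : instRank cl (i, 2) b ≠ ⊤) :
    b = Sum.inl (cl i 0) ∨ b = Sum.inl (cl i 2) := by
  rcases b with u | jt
  · by_cases h0 : u = cl i 0
    · exact Or.inl (by rw [h0])
    by_cases h1 : u = cl i 2
    · exact Or.inr (by rw [h1])
    · exact absurd (by simp [instRank, h0, h1, show ((2:Fin 9):ℕ) = 2 from rfl]) h
  · exact absurd (by simp [instRank, show ((2:Fin 9):ℕ) = 2 from rfl]) h

lemma edge3 (b : InstItems m n) (h : instRank cl (i, 3) b ≠ ⊤) :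
    b = Sum.inl (cl i 0) ∨ b = Sum.inr (i, 0) := by
  rcases b with u | ⟨j, t⟩
  · by_cases h0 : u = cl i 0
    · exact Or.inl (by rw [h0])
    · exact absurd (by simp [instRank, h0, show ((3:Fin 9):ℕ) = 3 from rfl]) h
  · by_cases hj : j = i
    · subst hj
      by_cases ht : t = 0
      · subst ht; exact Or.inr rfl
      · exact absurd (by
          simp [instRank, show ((3:Fin 9):ℕ) = 3 from rfl,
            show (t:ℕ) ≠ 0 from fun hc => ht (Fin.ext hc)]) h
    · exact absurd (by simp [instRank, hj]) h

lemma edge4 (b : InstItems m n) (h : instRank cl (i, 4) b ≠ ⊤) :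
    b = Sum.inl (cl i 1) ∨ b = Sum.inr (i, 1) := by
  rcases b with u | ⟨j, t⟩
  · by_cases h0 : u = cl i 1
    · exact Or.inl (by rw [h0])
    · exact absurd (by simp [instRank, h0, show ((4:Fin 9):ℕ) = 4 from rfl]) h
  · by_cases hj : j = i
    · subst hj
      by_cases ht : t = 1
      · subst ht; exact Or.inr rfl
      · exact absurd (by
          simp [instRank, show ((4:Fin 9):ℕ) = 4 from rfl,
            show (t:ℕ) ≠ 1 from fun hc => ht (Fin.ext hc)]) h
    · exact absurd (by simp [instRank, hj]) h

lemma edge5 (b : InstItems m n) (h : instRank cl (i, 5) b ≠ ⊤) :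
    b = Sum.inl (cl i 2) ∨ b = Sum.inr (i, 2) := by
  rcases b with u | ⟨j, t⟩
  · by_cases h0 : u = cl i 2
    · exact Or.inl (by rw [h0])
    · exact absurd (by simp [instRank, h0, show ((5:Fin 9):ℕ) = 5 from rfl]) h
  · by_cases hj : j = i
    · subst hj
      by_cases ht : t = 2
      · subst ht; exact Or.inr rfl
      · exact absurd (by
          simp [instRank, show ((5:Fin 9):ℕ) = 5 from rfl,
            show (t:ℕ) ≠ 2 from fun hc => ht (Fin.ext hc)]) h
    · exact absurd (by simp [instRank, hj]) h

lemma edge6 (b : InstItems m n) (h : instRank cl (i, 6) b ≠ ⊤) :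
    b = Sum.inr (i, 0) ∨ b = Sum.inr (i, 3) := by
  rcases b with u | ⟨j, t⟩
  · exact absurd (by simp [instRank, show ((6:Fin 9):ℕ) = 6 from rfl]) h
  · by_cases hj : j = i
    · subst hj
      by_cases ht : t = 0
      · subst ht; exact Or.inl rfl
      by_cases ht3 : t = 3
      · subst ht3; exact Or.inr rfl
      · exact absurd (by
          simp [instRank, show ((6:Fin 9):ℕ) = 6 from rfl,
            show (t:ℕ) ≠ 0 from fun hc => ht (Fin.ext hc),
            show (t:ℕ) ≠ 3 from fun hc => ht3 (Fin.ext hc)]) h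
    · exact absurd (by simp [instRank, hj]) h

lemma edge7 (b : InstItems m n) (h : instRank cl (i, 7) b ≠ ⊤) :
    b = Sum.inr (i, 1) ∨ b = Sum.inr (i, 3) := by
  rcases b with u | ⟨j, t⟩
  · exact absurd (by simp [instRank, show ((7:Fin 9):ℕ) = 7 from rfl]) h
  · by_cases hj : j = i
    · subst hj
      by_cases ht : t = 1
      · subst ht; exact Or.inl rfl
      by_cases ht3 : t = 3
      · subst ht3; exact Or.inr rfl
      · exact absurd (by
          simp [instRank, show ((7:Fin 9):ℕ) = 7 from rfl,
            show (t:ℕ) ≠ 1 from fun hc => ht (Fin.ext hc),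
            show (t:ℕ) ≠ 3 from fun hc => ht3 (Fin.ext hc)]) h
    · exact absurd (by simp [instRank, hj]) h

lemma edge8 (b : InstItems m n) (h : instRank cl (i, 8) b ≠ ⊤) :
    b = Sum.inr (i, 2) ∨ b = Sum.inr (i, 3) := by
  rcases b with u | ⟨j, t⟩
  · exact absurd (by simp [instRank, show ((8:Fin 9):ℕ) = 8 from rfl]) h
  · by_cases hj : j = i
    · subst hj
      by_cases ht : t = 2
      · subst ht; exact Or.inl rfl
      by_cases ht3 : t = 3
      · subst ht3; exact Or.inr rfl
      · exact absurd (by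
          simp [instRank, show ((8:Fin 9):ℕ) = 8 from rfl,
            show (t:ℕ) ≠ 2 from fun hc => ht (Fin.ext hc),
            show (t:ℕ) ≠ 3 from fun hc => ht3 (Fin.ext hc)]) h
    · exact absurd (by simp [instRank, hj]) h

lemma r3u : instRank cl (i, 3) (Sum.inl (cl i 0)) = 1 := by
  simp [instRank, show ((3:Fin 9):ℕ) = 3 from rfl]
lemma r4u : instRank cl (i, 4) (Sum.inl (cl i 1)) = 1 := by
  simp [instRank, show ((4:Fin 9):ℕ) = 4 from rfl]
lemma r5u : instRank cl (i, 5) (Sum.inl (cl i 2)) = 1 := by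
  simp [instRank, show ((5:Fin 9):ℕ) = 5 from rfl]
lemma r3p : instRank cl (i, 3) (Sum.inr (i, 0)) = 2 := by
  simp [instRank, show ((3:Fin 9):ℕ) = 3 from rfl, show ((0:Fin 4):ℕ) = 0 from rfl]
lemma r4p : instRank cl (i, 4) (Sum.inr (i, 1)) = 2 := by
  simp [instRank, show ((4:Fin 9):ℕ) = 4 from rfl, show ((1:Fin 4):ℕ) = 1 from rfl]
lemma r5p : instRank cl (i, 5) (Sum.inr (i, 2)) = 2 := by
  simp [instRank, show ((5:Fin 9):ℕ) = 5 from rfl, show ((2:Fin 4):ℕ) = 2 from rfl]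
lemma r6p : instRank cl (i, 6) (Sum.inr (i, 0)) = 1 := by
  simp [instRank, show ((6:Fin 9):ℕ) = 6 from rfl, show ((0:Fin 4):ℕ) = 0 from rfl]
lemma r7p : instRank cl (i, 7) (Sum.inr (i, 1)) = 1 := by
  simp [instRank, show ((7:Fin 9):ℕ) = 7 from rfl, show ((1:Fin 4):ℕ) = 1 from rfl]
lemma r8p : instRank cl (i, 8) (Sum.inr (i, 2)) = 1 := by
  simp [instRank, show ((8:Fin 9):ℕ) = 8 from rfl, show ((2:Fin 4):ℕ) = 2 from rfl]
lemma r6q : instRank cl (i, 6) (Sum.inr (i, 3)) = 2 := by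
  simp [instRank, show ((6:Fin 9):ℕ) = 6 from rfl, show ((3:Fin 4):ℕ) = 3 from rfl]
lemma r7q : instRank cl (i, 7) (Sum.inr (i, 3)) = 2 := by
  simp [instRank, show ((7:Fin 9):ℕ) = 7 from rfl, show ((3:Fin 4):ℕ) = 3 from rfl]
lemma r8q : instRank cl (i, 8) (Sum.inr (i, 3)) = 2 := by
  simp [instRank, show ((8:Fin 9):ℕ) = 8 from rfl, show ((3:Fin 4):ℕ) = 3 from rfl]

/-- Core popularity contradiction: person `(i,k3)` matched to internal item `p = (i,s4)`
while person `(i,k6)` is matched to `q = (i,3)`, and a copy of the rank-1 public item `u`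
of `(i,k3)` has been bought. -/
lemma contra_one {copies : InstItems m n → ℕ} {M : Fin m × Fin 9 → Option (InstItems m n)}
    (hpop : PopularCap (instRank cl) copies M) {k3 k6 : Fin 9} {s4 : Fin 4} {u : Fin n}
    (hr1 : instRank cl (i, k3) (Sum.inl u) = 1)
    (hr2 : instRank cl (i, k3) (Sum.inr (i, s4)) = 2)
    (hr3 : instRank cl (i, k6) (Sum.inr (i, s4)) = 1)
    (hr4 : instRank cl (i, k6) (Sum.inr (i, (3 : Fin 4))) = 2)
    (hk : k3 ≠ k6)
    (hA3 : M (i, k3) = some (Sum.inr (i, s4)))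
    (hA6 : M (i, k6) = some (Sum.inr (i, 3)))
    (hcop : 1 ≤ copies (Sum.inl u)) : False := by
  classical
  by_cases husage : usage M (Sum.inl u) = 0
  · exact pop_no_single_improve hpop hA3
      (by rw [hr1, hr2]; norm_num) (by rw [husage]; exact hcop)
  · have hpos : 0 < (univ.filter (fun a => M a = some (Sum.inl u))).card := by
      rw [← usage_eq_filter]; exact Nat.pos_of_ne_zero husage
    obtain ⟨x, hx⟩ := Finset.card_pos.mp hpos
    have hMx : M x = some (Sum.inl u) := (Finset.mem_filter.mp hx).2
    have hx3 : (i, k3) ≠ x := by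
      intro hc; rw [← hc, hA3] at hMx
      exact nomatch hMx
    have hx6 : (i, k6) ≠ x := by
      intro hc; rw [← hc, hA6] at hMx
      exact nomatch hMx
    have h12 : (i, k6) ≠ (i, k3) := by
      intro hc; exact hk (congrArg Prod.snd hc).symm
    exact pop_no_swap hpop h12 hx6 hx3 hA6 hA3 hMx
      (by rw [hr3, hr4]; norm_num)
      (by rw [hr1, hr2]; norm_num)

end Inst


open Finset in
lemma clause_bound {m n : ℕ} (cl : Fin m → Fin 3 → Fin n) {copies : InstItems m n → ℕ}
    {M : Fin m × Fin 9 → Option (InstItems m n)}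
    (hpop : PopularCap (instRank cl) copies M) (hall : ∀ a, (M a).isSome) (i : Fin m) :
    14 ≤ ∑ k : Fin 9, mcost (M (i, k)) := by
  classical
  have hexp : ∑ k : Fin 9, mcost (M (i, k)) =
      mcost (M (i,0)) + mcost (M (i,1)) + mcost (M (i,2)) + mcost (M (i,3)) + mcost (M (i,4)) +
      mcost (M (i,5)) + mcost (M (i,6)) + mcost (M (i,7)) + mcost (M (i,8)) := by
    rw [show (Finset.univ : Finset (Fin 9)) = {0,1,2,3,4,5,6,7,8} from rfl]
    rw [Finset.sum_insert (by decide), Finset.sum_insert (by decide), Finset.sum_insert (by decide),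
      Finset.sum_insert (by decide), Finset.sum_insert (by decide), Finset.sum_insert (by decide),
      Finset.sum_insert (by decide), Finset.sum_insert (by decide), Finset.sum_singleton]
    ring
  rw [hexp]
  have h0 : mcost (M (i,0)) = 3 := by
    obtain ⟨b, hb⟩ := Option.isSome_iff_exists.mp (hall (i,0))
    rcases edge0 cl i b (hpop.1.1 _ b hb) with rfl | rfl <;> (rw [hb]; rfl)
  have h1 : mcost (M (i,1)) = 3 := by
    obtain ⟨b, hb⟩ := Option.isSome_iff_exists.mp (hall (i,1))
    rcases edge1 cl i b (hpop.1.1 _ b hb) with rfl | rfl <;> (rw [hb]; rfl)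
  have h2 : mcost (M (i,2)) = 3 := by
    obtain ⟨b, hb⟩ := Option.isSome_iff_exists.mp (hall (i,2))
    rcases edge2 cl i b (hpop.1.1 _ b hb) with rfl | rfl <;> (rw [hb]; rfl)
  have O3 : M (i,3) = some (Sum.inr (i,(0:Fin 4))) ∨ mcost (M (i,3)) = 3 := by
    obtain ⟨b, hb⟩ := Option.isSome_iff_exists.mp (hall (i,3))
    rcases edge3 cl i b (hpop.1.1 _ b hb) with rfl | rfl
    · exact Or.inr (by rw [hb]; rfl)
    · exact Or.inl hb
  have O4 : M (i,4) = some (Sum.inr (i,(1:Fin 4))) ∨ mcost (M (i,4)) = 3 := by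
    obtain ⟨b, hb⟩ := Option.isSome_iff_exists.mp (hall (i,4))
    rcases edge4 cl i b (hpop.1.1 _ b hb) with rfl | rfl
    · exact Or.inr (by rw [hb]; rfl)
    · exact Or.inl hb
  have O5 : M (i,5) = some (Sum.inr (i,(2:Fin 4))) ∨ mcost (M (i,5)) = 3 := by
    obtain ⟨b, hb⟩ := Option.isSome_iff_exists.mp (hall (i,5))
    rcases edge5 cl i b (hpop.1.1 _ b hb) with rfl | rfl
    · exact Or.inr (by rw [hb]; rfl)
    · exact Or.inl hb
  have O6 : M (i,6) = some (Sum.inr (i,(0:Fin 4))) ∨ M (i,6) = some (Sum.inr (i,(3:Fin 4))) := by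
    obtain ⟨b, hb⟩ := Option.isSome_iff_exists.mp (hall (i,6))
    rcases edge6 cl i b (hpop.1.1 _ b hb) with rfl | rfl
    · exact Or.inl hb
    · exact Or.inr hb
  have O7 : M (i,7) = some (Sum.inr (i,(1:Fin 4))) ∨ M (i,7) = some (Sum.inr (i,(3:Fin 4))) := by
    obtain ⟨b, hb⟩ := Option.isSome_iff_exists.mp (hall (i,7))
    rcases edge7 cl i b (hpop.1.1 _ b hb) with rfl | rfl
    · exact Or.inl hb
    · exact Or.inr hb
  have O8 : M (i,8) = some (Sum.inr (i,(2:Fin 4))) ∨ M (i,8) = some (Sum.inr (i,(3:Fin 4))) := by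
    obtain ⟨b, hb⟩ := Option.isSome_iff_exists.mp (hall (i,8))
    rcases edge8 cl i b (hpop.1.1 _ b hb) with rfl | rfl
    · exact Or.inl hb
    · exact Or.inr hb
  have l3 : 1 ≤ mcost (M (i,3)) := by
    rcases O3 with h | h <;> rw [h] <;> norm_num [mcost, instCost]
  have l4 : 1 ≤ mcost (M (i,4)) := by
    rcases O4 with h | h <;> rw [h] <;> norm_num [mcost, instCost]
  have l5 : 1 ≤ mcost (M (i,5)) := by
    rcases O5 with h | h <;> rw [h] <;> norm_num [mcost, instCost]
  rcases O3 with h3 | h3c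
  · rcases O4 with h4 | h4c
    · rcases O5 with h5 | h5c
      · have c3 : mcost (M (i,3)) = 1 := by rw [h3]; rfl
        have c4 : mcost (M (i,4)) = 1 := by rw [h4]; rfl
        have c5 : mcost (M (i,5)) = 1 := by rw [h5]; rfl
        rcases O6 with h6p | h6q
        · rcases O7 with h7p | h7q
          · -- at most one q (namely maybe 8)
            have c6 : mcost (M (i,6)) = 1 := by rw [h6p]; rfl
            have c7 : mcost (M (i,7)) = 1 := by rw [h7p]; rfl
            omega
          · rcases O8 with h8p | h8q
            · have c6 : mcost (M (i,6)) = 1 := by rw [h6p]; rfl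
              have c8 : mcost (M (i,8)) = 1 := by rw [h8p]; rfl
              omega
            · -- a8 and a9 on q : use pair person a2 = (i,1) with list (u_{j2}, u_{j3})
              obtain ⟨b, hb⟩ := Option.isSome_iff_exists.mp (hall (i,1))
              have hcb : 1 ≤ copies b :=
                le_trans (usage_pos_of_matched M _ b hb) (hpop.1.2 b)
              rcases edge1 cl i b (hpop.1.1 _ b hb) with rfl | rfl
              · exact (contra_one cl i hpop (r4u cl i) (r4p cl i) (r7p cl i) (r7q cl i)
                  (by decide) h4 h7q hcb).elim
              · exact (contra_one cl i hpop (r5u cl i) (r5p cl i) (r8p cl i) (r8q cl i)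
                  (by decide) h5 h8q hcb).elim
        · rcases O7 with h7p | h7q
          · rcases O8 with h8p | h8q
            · have c7 : mcost (M (i,7)) = 1 := by rw [h7p]; rfl
              have c8 : mcost (M (i,8)) = 1 := by rw [h8p]; rfl
              omega
            · -- a7 and a9 on q : pair person a3 = (i,2) with list (u_{j1}, u_{j3})
              obtain ⟨b, hb⟩ := Option.isSome_iff_exists.mp (hall (i,2))
              have hcb : 1 ≤ copies b :=
                le_trans (usage_pos_of_matched M _ b hb) (hpop.1.2 b)
              rcases edge2 cl i b (hpop.1.1 _ b hb) with rfl | rfl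
              · exact (contra_one cl i hpop (r3u cl i) (r3p cl i) (r6p cl i) (r6q cl i)
                  (by decide) h3 h6q hcb).elim
              · exact (contra_one cl i hpop (r5u cl i) (r5p cl i) (r8p cl i) (r8q cl i)
                  (by decide) h5 h8q hcb).elim
          · -- a7 and a8 on q : pair person a1 = (i,0) with list (u_{j1}, u_{j2})
            obtain ⟨b, hb⟩ := Option.isSome_iff_exists.mp (hall (i,0))
            have hcb : 1 ≤ copies b :=
              le_trans (usage_pos_of_matched M _ b hb) (hpop.1.2 b)
            rcases edge0 cl i b (hpop.1.1 _ b hb) with rfl | rfl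
            · exact (contra_one cl i hpop (r3u cl i) (r3p cl i) (r6p cl i) (r6q cl i)
                (by decide) h3 h6q hcb).elim
            · exact (contra_one cl i hpop (r4u cl i) (r4p cl i) (r7p cl i) (r7q cl i)
                (by decide) h4 h7q hcb).elim
      · omega
    · omega
  · omega

set_option maxHeartbeats 1000000 in
/-- Any choice of copies of the items for which the resulting instance admits a popular
matching that matches all people has total cost at least `14m`. -/
theorem min_cost_popular_instance_lower_bound {m n : ℕ}
    (cl : Fin m → Fin 3 → Fin n) (hdist : ∀ i, Function.Injective (cl i))
    (copies : InstItems m n → ℕ)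
    (hpop : ∃ M : Fin m × Fin 9 → Option (InstItems m n),
      PopularCap (instRank cl) copies M ∧ ∀ a, (M a).isSome) :
    14 * m ≤ instTotalCost copies := by
  classical
  obtain ⟨M, hpopM, hall⟩ := hpop
  have step1 : 14 * m ≤ ∑ i : Fin m, ∑ k : Fin 9, mcost (M (i, k)) := by
    calc 14 * m = ∑ _i : Fin m, 14 := by
          rw [Finset.sum_const, Finset.card_univ, Fintype.card_fin, smul_eq_mul, mul_comm]
      _ ≤ _ := Finset.sum_le_sum (fun i _ => clause_bound cl hpopM hall i)
  have step2 : ∑ i : Fin m, ∑ k : Fin 9, mcost (M (i, k)) =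
      ∑ a : Fin m × Fin 9, mcost (M a) := by rw [Fintype.sum_prod_type]
  have step3 : ∑ a : Fin m × Fin 9, mcost (M a) =
      ∑ b : InstItems m n, usage M b * instCost b := by
    have h1 : ∀ b : InstItems m n, usage M b * instCost b =
        ∑ a : Fin m × Fin 9, if M a = some b then instCost b else 0 := by
      intro b
      rw [usage_eq_filter, ← Finset.sum_filter, Finset.sum_const, smul_eq_mul]
    rw [Finset.sum_congr rfl (fun b _ => h1 b), Finset.sum_comm]
    apply Finset.sum_congr rfl
    intro a _
    cases hMa : M a with
    | none => simp [mcost]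
    | some b0 =>
        simp only [hMa, Option.some.injEq]
        rw [Finset.sum_ite_eq, if_pos (Finset.mem_univ b0)]
        rfl
  have step4 : ∑ b : InstItems m n, usage M b * instCost b ≤ instTotalCost copies := by
    unfold instTotalCost
    exact Finset.sum_le_sum (fun b _ => Nat.mul_le_mul_right (instCost b) (hpopM.1.2 b))
  calc 14 * m ≤ _ := step1
    _ = _ := step2
    _ = _ := step3
    _ ≤ _ := step4
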